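/- For every prime power q ≥ 4 and every integer n ≥ 2 there exists a single permutation f of F_q^n such that k-affinity(f) = 0 simultaneously for all integers k with 1 ≤ k ≤ n−1. -/
import Mathlib

open Finset Nat

/-- A `k`-flat in an `F`-vector space `V`: a coset of a `k`-dimensional `F`-subspace. -/
def IsFlat (F : Type*) {V : Type*} [Field F] [AddCommGroup V] [Module F V]
    (k : ℕ) (X : Set V) : Prop :=
  ∃ (U : Submodule F V) (x : V), Module.finrank F U = k ∧ X = (fun u => u + x) '' (U : Set V)

/-- The `k`-affinity of a map `f : V → V`: the number of `k`-flats `X` of `V`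
such that `f(X)` is also a `k`-flat. -/
noncomputable def affinity (F : Type*) {V : Type*} [Field F] [AddCommGroup V] [Module F V]
    (k : ℕ) (f : V → V) : ℕ :=
  {X : Set V | IsFlat F k X ∧ IsFlat F k (f '' X)}.ncard

/-- The `k`-coaffinity of a map `f : V → V`: the number of `k`-flats `X` of `V`
such that `f(X)` is not a `k`-flat. -/
noncomputable def coaffinity (F : Type*) {V : Type*} [Field F] [AddCommGroup V] [Module F V]
    (k : ℕ) (f : V → V) : ℕ :=
  {X : Set V | IsFlat F k X ∧ ¬ IsFlat F k (f '' X)}.ncard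

section Helpers

variable (F : Type*) {V : Type*} [Field F] [AddCommGroup V] [Module F V]

def aflat (x : V) {k : ℕ} (u : Fin k → V) : Set V :=
  Set.range fun t : Fin k → F => x + ∑ i, t i • u i

variable {F}

lemma IsFlat.exists_param [FiniteDimensional F V] {k : ℕ} {X : Set V} (h : IsFlat F k X) :
    ∃ (x : V) (u : Fin k → V), LinearIndependent F u ∧ X = aflat F x u := by
  obtain ⟨U, x, hU, rfl⟩ := h
  let b := Module.finBasisOfFinrankEq F U hU
  refine ⟨x, fun i => (b i : V),
    b.linearIndependent.map' U.subtype (Submodule.ker_subtype U), ?_⟩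
  ext v
  simp only [aflat, Set.mem_image, Set.mem_range, SetLike.mem_coe]
  constructor
  · rintro ⟨w, hw, rfl⟩
    refine ⟨b.repr ⟨w, hw⟩, ?_⟩
    have hrepr := b.sum_repr ⟨w, hw⟩
    have hsum : ((∑ i, b.repr ⟨w, hw⟩ i • b i : U) : V) = w := by rw [hrepr]
    rw [AddSubmonoidClass.coe_finset_sum] at hsum
    simp only [SetLike.val_smul] at hsum
    rw [hsum, add_comm]
  · rintro ⟨t, rfl⟩
    refine ⟨((∑ i, t i • b i : U) : V), (∑ i, t i • b i : U).2, ?_⟩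
    push_cast
    rw [add_comm]

lemma aflat_shift {k : ℕ} (x : V) (u : Fin k → V) (s : Fin k → F) :
    aflat F (x + ∑ i, s i • u i) u = aflat F x u := by
  ext v
  simp only [aflat, Set.mem_range]
  constructor
  · rintro ⟨t, rfl⟩
    refine ⟨s + t, ?_⟩
    simp only [Pi.add_apply, add_smul, Finset.sum_add_distrib]
    abel
  · rintro ⟨t, rfl⟩
    refine ⟨t - s, ?_⟩
    simp only [Pi.sub_apply, sub_smul, Finset.sum_sub_distrib]
    abel

lemma aflat_unit_smul {k : ℕ} (x : V) (u : Fin k → V) (l : Fin k → Fˣ) :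
    aflat F x (fun i => (l i : F) • u i) = aflat F x u := by
  ext v
  simp only [aflat, Set.mem_range]
  constructor
  · rintro ⟨t, rfl⟩
    exact ⟨fun i => t i * (l i : F), by simp [smul_smul]⟩
  · rintro ⟨t, rfl⟩
    refine ⟨fun i => t i * ((l i)⁻¹ : Fˣ), ?_⟩
    congr 1
    refine Finset.sum_congr rfl fun i _ => ?_
    rw [smul_smul, mul_assoc]
    simp

lemma IsFlat.natCard [Fintype F] [Fintype V] {k : ℕ} {X : Set V} (h : IsFlat F k X) :
    Nat.card X = Fintype.card F ^ k := by
  classical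
  obtain ⟨U, x, hU, rfl⟩ := h
  rw [Nat.card_image_of_injective (add_left_injective x)]
  have : Nat.card (↥(U : Set V)) = Nat.card U := rfl
  rw [this, Nat.card_eq_fintype_card, Module.card_eq_pow_finrank (K := F), hU]

lemma card_flats_mul_le [Fintype F] [Fintype V] (k : ℕ) :
    Nat.card {X : Set V // IsFlat F k X} * (Fintype.card F ^ k * (Fintype.card F - 1) ^ k)
      ≤ Fintype.card V ^ (k + 1) := by
  classical
  choose xx uu hind heq using fun X : {X : Set V // IsFlat F k X} => X.2.exists_param
  set Φ : {X : Set V // IsFlat F k X} × ((Fin k → F) × (Fin k → Fˣ)) → V × (Fin k → V) :=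
    fun P => (xx P.1 + ∑ i, P.2.1 i • uu P.1 i, fun i => (P.2.2 i : F) • uu P.1 i) with hΦ
  have hval : ∀ P : {X : Set V // IsFlat F k X} × ((Fin k → F) × (Fin k → Fˣ)),
      (P.1 : Set V) = aflat F (Φ P).1 ((Φ P).2) := by
    intro P
    rw [hΦ]
    dsimp only
    rw [aflat_unit_smul, aflat_shift, ← heq P.1]
  have hinj : Function.Injective Φ := by
    intro P Q hPQ
    have h1 : P.1 = Q.1 := by
      have := (hval P).trans (by rw [hPQ, ← hval Q])
      exact Subtype.ext this
    obtain ⟨⟨X, hX⟩, s, l⟩ := P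
    obtain ⟨⟨X', hX'⟩, s', l'⟩ := Q
    cases h1
    have h2 : (fun i => (l i : F) • uu ⟨X, hX⟩ i) = fun i => (l' i : F) • uu ⟨X, hX⟩ i :=
      congrArg Prod.snd hPQ
    have h3 : ∀ i, l i = l' i := by
      intro i
      have hii := congrFun h2 i
      have hne := (hind ⟨X, hX⟩).ne_zero i
      have hz : ((l i : F) - (l' i : F)) • uu ⟨X, hX⟩ i = 0 := by
        rw [sub_smul, hii, sub_self]
      rcases smul_eq_zero.1 hz with h | h
      · exact Units.ext (sub_eq_zero.1 h)
      · exact absurd h hne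
    have h4 : s = s' := by
      have h5 : xx ⟨X, hX⟩ + ∑ i, s i • uu ⟨X, hX⟩ i = xx ⟨X, hX⟩ + ∑ i, s' i • uu ⟨X, hX⟩ i :=
        congrArg Prod.fst hPQ
      have h6 := add_left_cancel h5
      have h7 : ∑ i, (s i - s' i) • uu ⟨X, hX⟩ i = 0 := by
        simp only [sub_smul, Finset.sum_sub_distrib, h6, sub_self]
      have h8 := Fintype.linearIndependent_iff.1 (hind ⟨X, hX⟩) (fun i => s i - s' i) h7
      funext i
      exact sub_eq_zero.1 (h8 i)
    simp only [Prod.mk.injEq]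
    exact ⟨trivial, h4, funext h3⟩
  have hle := Nat.card_le_card_of_injective Φ hinj
  have e1 : Nat.card ({X : Set V // IsFlat F k X} × ((Fin k → F) × (Fin k → Fˣ)))
      = Nat.card {X : Set V // IsFlat F k X}
        * (Fintype.card F ^ k * (Fintype.card F - 1) ^ k) := by
    simp [Nat.card_prod, Nat.card_eq_fintype_card, Fintype.card_fun, Fintype.card_units]
  have e2 : Nat.card (V × (Fin k → V)) = Fintype.card V ^ (k + 1) := by
    simp [Nat.card_prod, Nat.card_eq_fintype_card, Fintype.card_fun]
    ring
  rw [e1, e2] at hle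
  exact hle

end Helpers


lemma card_perm_restrict_le {V : Type*} [Fintype V] (X Y : Set V) (m : ℕ)
    (hX : Nat.card X = m) (hY : Nat.card Y = m) :
    Nat.card {f : Equiv.Perm V // f '' X = Y} ≤ m ! * (Fintype.card V - m)! := by
  classical
  have himg : ∀ (f : Equiv.Perm V), f '' X = Y → f '' Xᶜ = Yᶜ := by
    intro f hf
    rw [Set.image_compl_eq f.bijective, hf]
  set G : {f : Equiv.Perm V // f '' X = Y} → ((↥X ↪ ↥Y) × (↥(Xᶜ) ↪ ↥(Yᶜ))) := fun fp =>
    (⟨fun a => ⟨fp.1 a, by have := Set.mem_image_of_mem (⇑fp.1) a.2; rwa [fp.2] at this⟩,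
      fun a b hab => Subtype.ext (fp.1.injective (congrArg Subtype.val hab))⟩,
     ⟨fun a => ⟨fp.1 a, by
        have := Set.mem_image_of_mem (⇑fp.1) a.2; rwa [himg fp.1 fp.2] at this⟩,
      fun a b hab => Subtype.ext (fp.1.injective (congrArg Subtype.val hab))⟩) with hG
  have hGinj : Function.Injective G := by
    intro f g hfg
    apply Subtype.ext
    apply Equiv.ext
    intro v
    by_cases hv : v ∈ X
    · have h1 := congrArg Prod.fst hfg
      have h2 := congrFun (congrArg (fun (e : ↥X ↪ ↥Y) => (e : ↥X → ↥Y)) h1) ⟨v, hv⟩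
      exact congrArg Subtype.val h2
    · have h1 := congrArg Prod.snd hfg
      have h2 := congrFun (congrArg (fun (e : ↥(Xᶜ) ↪ ↥(Yᶜ)) => (e : ↥(Xᶜ) → ↥(Yᶜ))) h1) ⟨v, hv⟩
      exact congrArg Subtype.val h2
  have hcard := Nat.card_le_card_of_injective G hGinj
  have hx : Fintype.card ↥X = m := by rw [← Nat.card_eq_fintype_card]; exact hX
  have hy : Fintype.card ↥Y = m := by rw [← Nat.card_eq_fintype_card]; exact hY
  have hxc : Fintype.card ↥(Xᶜ) = Fintype.card V - m := by rw [Fintype.card_compl_set, hx]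
  have hyc : Fintype.card ↥(Yᶜ) = Fintype.card V - m := by rw [Fintype.card_compl_set, hy]
  simp only [Nat.card_prod, Nat.card_eq_fintype_card] at hcard ⊢
  rw [Fintype.card_prod, Fintype.card_embedding_eq, Fintype.card_embedding_eq, hx, hy, hxc, hyc,
    Nat.descFactorial_self, Nat.descFactorial_self] at hcard
  exact hcard


-- two-term binomial lower bound
lemma bern (a m : ℕ) : a ^ (m + 1) + (m + 1) * a ^ m ≤ (a + 1) ^ (m + 1) := by
  induction m with
  | zero => simp
  | succ m ih =>
    have h : (a + 1) ^ (m + 2) = (a + 1) ^ (m + 1) * (a + 1) := by ring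
    rw [h]
    calc a ^ (m + 2) + (m + 2) * a ^ (m + 1)
        ≤ (a ^ (m + 1) + (m + 1) * a ^ m) * (a + 1) := by ring_nf; nlinarith [pow_nonneg (Nat.zero_le a) m]
      _ ≤ (a + 1) ^ (m + 1) * (a + 1) := Nat.mul_le_mul_right _ ih

lemma L1 (q : ℕ) (hq : 4 ≤ q) : 5 * q ! * q ^ 2 ≤ 3 * (q - 1) ^ (q + 2) := by
  induction q, hq using Nat.le_induction with
  | base => decide
  | succ q hq ih =>
    -- goal : 5 * (q+1)! * (q+1)^2 ≤ 3 * q ^ (q+3)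
    have h1 : 2 * (q - 1) ^ (q + 2) ≤ q ^ (q + 2) := by
      have hb := bern (q - 1) (q + 1)
      have hq1 : q - 1 + 1 = q := by omega
      rw [hq1] at hb
      simp only [show q + 1 + 1 = q + 2 from rfl] at hb
      have h2 : (q - 1) ^ (q + 2) ≤ (q + 2) * (q - 1) ^ (q + 1) := by
        calc (q - 1) ^ (q + 2) = (q - 1) * (q - 1) ^ (q + 1) := by ring
          _ ≤ (q + 2) * (q - 1) ^ (q + 1) := Nat.mul_le_mul_right _ (by omega)
      omega
    have h3 : (q + 1) ^ 3 ≤ 2 * q ^ 3 := by nlinarith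
    have key : 5 * (q + 1)! * (q + 1) ^ 2 = 5 * q ! * (q + 1) ^ 3 := by
      rw [Nat.factorial_succ]; ring
    rw [key]
    have step1 : 5 * q ! * (q + 1) ^ 3 ≤ 5 * q ! * (2 * q ^ 3) :=
      Nat.mul_le_mul_left _ h3
    have step2 : 5 * q ! * (2 * q ^ 3) = (5 * q ! * q ^ 2) * (2 * q) := by ring
    have step3 : (5 * q ! * q ^ 2) * (2 * q) ≤ (3 * (q - 1) ^ (q + 2)) * (2 * q) :=
      Nat.mul_le_mul_right _ ih
    have step4 : (3 * (q - 1) ^ (q + 2)) * (2 * q) = 3 * q * (2 * (q - 1) ^ (q + 2)) := by ring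
    have step5 : 3 * q * (2 * (q - 1) ^ (q + 2)) ≤ 3 * q * q ^ (q + 2) :=
      Nat.mul_le_mul_left _ h1
    have step6 : 3 * q * q ^ (q + 2) = 3 * q ^ (q + 3) := by ring
    calc 5 * q ! * (q + 1) ^ 3 ≤ 5 * q ! * (2 * q ^ 3) := step1
      _ = (5 * q ! * q ^ 2) * (2 * q) := step2
      _ ≤ (3 * (q - 1) ^ (q + 2)) * (2 * q) := step3
      _ = 3 * q * (2 * (q - 1) ^ (q + 2)) := step4
      _ ≤ 3 * q * q ^ (q + 2) := step5
      _ = 3 * q ^ (q + 3) := step6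

lemma L2 (m r : ℕ) (h : 2 * r ≤ m) : m ^ r ≤ r ^ r * m.choose r := by
  induction r with
  | zero => simp
  | succ r ih =>
    rcases Nat.eq_zero_or_pos r with hr0 | hrpos
    · subst hr0; simp [Nat.choose_one_right]
    · have ihr := ih (by omega)
      refine Nat.le_of_mul_le_mul_right ?_ (show 0 < r + 1 by omega)
      have hrw : (r + 1) ^ (r + 1) * m.choose (r + 1) * (r + 1)
          = (r + 1) ^ (r + 1) * (m.choose r * (m - r)) := by
        rw [mul_assoc, Nat.choose_succ_right_eq]
      rw [hrw]
      have hA : 2 * r ^ r ≤ (r + 1) ^ r := by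
        obtain ⟨s, rfl⟩ : ∃ s, r = s + 1 := ⟨r - 1, by omega⟩
        have hb := bern (s + 1) s
        have h9 : (s + 1) * (s + 1) ^ s = (s + 1) ^ (s + 1) := by ring
        omega
      have hB : m ≤ 2 * (m - r) := by omega
      calc m ^ (r + 1) * (r + 1) = m ^ r * (m * (r + 1)) := by ring
        _ ≤ (r ^ r * m.choose r) * (m * (r + 1)) := Nat.mul_le_mul_right _ ihr
        _ ≤ (r ^ r * m.choose r) * ((2 * (m - r)) * (r + 1)) := by
            exact Nat.mul_le_mul_left _ (Nat.mul_le_mul_right _ hB)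
        _ = (2 * r ^ r) * ((r + 1) * (m.choose r * (m - r))) := by ring
        _ ≤ (r + 1) ^ r * ((r + 1) * (m.choose r * (m - r))) := Nat.mul_le_mul_right _ hA
        _ = (r + 1) ^ (r + 1) * (m.choose r * (m - r)) := by ring

lemma L3 (k : ℕ) (hk : 2 ≤ k) : 2 * k ^ 2 + 2 * k + 2 ≤ 4 ^ k := by
  induction k, hk using Nat.le_induction with
  | base => decide
  | succ k hk ih =>
    have h : 4 ^ (k + 1) = 4 * 4 ^ k := by ring
    rw [h]
    nlinarith

lemma fact_eq (m k : ℕ) (h : k ≤ m) : m.descFactorial k * (m - k)! = m ! := by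
  rw [Nat.descFactorial_eq_factorial_mul_choose]
  calc k ! * m.choose k * (m - k)! = m.choose k * k ! * (m - k)! := by ring
    _ = m ! := Nat.choose_mul_factorial_mul_factorial h

-- k = 1 bound
lemma G1 (q n M1 : ℕ) (hq : 4 ≤ q) (hn : 2 ≤ n) (hM : M1 * (q * (q - 1)) ≤ q ^ (2 * n)) :
    5 * M1 ^ 2 * (q ! * (q ^ n - q)!) ≤ 3 * (q ^ n)! := by
  obtain ⟨a, rfl⟩ : ∃ a, n = a + 2 := ⟨n - 2, by omega⟩
  have hq0 : 0 < q := by omega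
  have hb : q ≤ q ^ (a + 1) := Nat.le_self_pow (by omega) q
  have hqn : q ≤ q ^ (a + 2) := Nat.le_self_pow (by omega) q
  -- reduce to the key inequality
  have key : 5 * M1 ^ 2 * q ! ≤ 3 * (q ^ (a + 2) - q + 1) ^ q := by
    refine Nat.le_of_mul_le_mul_right ?_ (show 0 < (q * (q - 1)) ^ 2 by
      have : 1 ≤ q - 1 := by omega
      positivity)
    have lhs_eq : 5 * M1 ^ 2 * q ! * (q * (q - 1)) ^ 2
        = 5 * q ! * (M1 * (q * (q - 1))) ^ 2 := by ring
    rw [lhs_eq]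
    have step1 : 5 * q ! * (M1 * (q * (q - 1))) ^ 2 ≤ 5 * q ! * (q ^ (2 * (a + 2))) ^ 2 :=
      Nat.mul_le_mul_left _ (Nat.pow_le_pow_left hM 2)
    refine step1.trans ?_
    -- (q^{2(a+2)})^2 = q^{4a+8}
    have e1 : (q ^ (2 * (a + 2))) ^ 2 = q ^ (4 * a + 8) := by
      rw [← pow_mul]; ring_nf
    rw [e1]
    -- lower bound for the RHS base
    have hbase : (q - 1) * q ^ (a + 1) ≤ q ^ (a + 2) - q + 1 := by
      have e2 : q ^ (a + 2) = q * q ^ (a + 1) := by ring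
      have e3 : (q - 1) * q ^ (a + 1) = q * q ^ (a + 1) - q ^ (a + 1) := by
        rw [Nat.sub_mul, one_mul]
      have e4 : q ^ (a + 1) ≤ q * q ^ (a + 1) := Nat.le_mul_of_pos_left _ hq0
      omega
    have hpow : ((q - 1) * q ^ (a + 1)) ^ q ≤ (q ^ (a + 2) - q + 1) ^ q :=
      Nat.pow_le_pow_left hbase q
    have e5 : ((q - 1) * q ^ (a + 1)) ^ q = (q - 1) ^ q * q ^ ((a + 1) * q) := by
      rw [mul_pow, ← pow_mul]
    -- RHS ≥ 3 * (q-1)^{q+2} * q^{(a+1)q + 2}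
    have rhs_ge : 3 * (q - 1) ^ (q + 2) * q ^ ((a + 1) * q + 2)
        ≤ 3 * (q ^ (a + 2) - q + 1) ^ q * (q * (q - 1)) ^ 2 := by
      calc 3 * (q - 1) ^ (q + 2) * q ^ ((a + 1) * q + 2)
          = 3 * ((q - 1) ^ q * q ^ ((a + 1) * q)) * (q * (q - 1)) ^ 2 := by ring
        _ ≤ 3 * (q ^ (a + 2) - q + 1) ^ q * (q * (q - 1)) ^ 2 := by
            rw [← e5]
            exact Nat.mul_le_mul_right _ (Nat.mul_le_mul_left _ hpow)
    refine le_trans ?_ rhs_ge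
    -- 5 q! q^{4a+8} ≤ 3 (q-1)^{q+2} q^{(a+1)q+2}
    have hexp : 4 * a + 6 ≤ (a + 1) * q + 2 := by nlinarith
    calc 5 * q ! * q ^ (4 * a + 8)
        = (5 * q ! * q ^ 2) * q ^ (4 * a + 6) := by
          rw [show 4 * a + 8 = 2 + (4 * a + 6) by omega, pow_add]; ring
      _ ≤ (3 * (q - 1) ^ (q + 2)) * q ^ (4 * a + 6) := Nat.mul_le_mul_right _ (L1 q hq)
      _ ≤ 3 * (q - 1) ^ (q + 2) * q ^ ((a + 1) * q + 2) := by
          exact Nat.mul_le_mul_left _ (Nat.pow_le_pow_right hq0 hexp)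
  -- assemble
  have hfac : (q ^ (a + 2))! = (q ^ (a + 2)).descFactorial q * (q ^ (a + 2) - q)! :=
    (fact_eq _ _ hqn).symm
  have hdesc : (q ^ (a + 2) - q + 1) ^ q ≤ (q ^ (a + 2)).descFactorial q := by
    have := Nat.pow_sub_le_descFactorial (q ^ (a + 2)) q
    have e : q ^ (a + 2) + 1 - q = q ^ (a + 2) - q + 1 := by omega
    rwa [e] at this
  calc 5 * M1 ^ 2 * (q ! * (q ^ (a + 2) - q)!)
      = (5 * M1 ^ 2 * q !) * (q ^ (a + 2) - q)! := by ring
    _ ≤ (3 * (q ^ (a + 2) - q + 1) ^ q) * (q ^ (a + 2) - q)! := Nat.mul_le_mul_right _ key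
    _ ≤ (3 * (q ^ (a + 2)).descFactorial q) * (q ^ (a + 2) - q)! := by
        exact Nat.mul_le_mul_right _ (Nat.mul_le_mul_left _ hdesc)
    _ = 3 * (q ^ (a + 2))! := by rw [mul_assoc, ← hfac]

-- k ≥ 2 bound
lemma G2 (q n k Mk : ℕ) (hq : 4 ≤ q) (hk : 2 ≤ k) (hkn : k + 1 ≤ n)
    (hM : Mk * (q ^ k * (q - 1) ^ k) ≤ q ^ (n * (k + 1))) :
    4 ^ k * Mk ^ 2 * ((q ^ k)! * (q ^ n - q ^ k)!) ≤ (q ^ n)! := by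
  obtain ⟨m, rfl⟩ : ∃ m, n = k + m + 1 := ⟨n - k - 1, by omega⟩
  set n' := k + m + 1 with hn'
  have hq0 : 0 < q := by omega
  have hkn' : q ^ k ≤ q ^ n' := Nat.pow_le_pow_right hq0 (by omega)
  have h2r : 2 * q ^ k ≤ q ^ n' := by
    have e1 : q ^ (k + 1) = q * q ^ k := by ring
    have e2 : q ^ (k + 1) ≤ q ^ n' := Nat.pow_le_pow_right hq0 (by omega)
    have e3 : 2 * q ^ k ≤ q * q ^ k := Nat.mul_le_mul_right _ (by omega)
    omega
  have hC := L2 (q ^ n') (q ^ k) h2r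
  have hCge : q ^ ((m + 1) * q ^ k) ≤ (q ^ n').choose (q ^ k) := by
    refine Nat.le_of_mul_le_mul_left ?_ (show 0 < q ^ (k * q ^ k) by positivity)
    calc q ^ (k * q ^ k) * q ^ ((m + 1) * q ^ k) = q ^ (n' * q ^ k) := by
          rw [← pow_add]; congr 1; rw [hn']; ring
      _ = (q ^ n') ^ (q ^ k) := by rw [pow_mul]
      _ ≤ (q ^ k) ^ (q ^ k) * (q ^ n').choose (q ^ k) := hC
      _ = q ^ (k * q ^ k) * (q ^ n').choose (q ^ k) := by rw [← pow_mul]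
  have hMk2 : 4 ^ k * Mk ^ 2 ≤ q ^ ((m + 1) * q ^ k) := by
    refine Nat.le_of_mul_le_mul_right ?_ (show 0 < q ^ (4 * k) by positivity)
    have hq2 : q ≤ 2 * (q - 1) := by omega
    have h1 : q ^ k ≤ 2 ^ k * (q - 1) ^ k := by
      rw [← mul_pow]; exact Nat.pow_le_pow_left hq2 k
    have h2 : Mk * q ^ (2 * k) ≤ 2 ^ k * q ^ (n' * (k + 1)) := by
      calc Mk * q ^ (2 * k) = Mk * (q ^ k * q ^ k) := by rw [two_mul, pow_add]
        _ ≤ Mk * (q ^ k * (2 ^ k * (q - 1) ^ k)) :=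
            Nat.mul_le_mul_left _ (Nat.mul_le_mul_left _ h1)
        _ = 2 ^ k * (Mk * (q ^ k * (q - 1) ^ k)) := by ring
        _ ≤ 2 ^ k * q ^ (n' * (k + 1)) := Nat.mul_le_mul_left _ hM
    have h4q : (4 : ℕ) ^ k ≤ q ^ k := Nat.pow_le_pow_left hq k
    have e22 : ((2 : ℕ) ^ k) ^ 2 = 4 ^ k := by
      rw [← pow_mul, show (4 : ℕ) = 2 ^ 2 from rfl, ← pow_mul]; ring_nf
    have hqk : 2 * k ^ 2 + 2 * k + 2 ≤ q ^ k :=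
      (L3 k hk).trans (Nat.pow_le_pow_left hq k)
    have hexp : 2 * (n' * (k + 1)) + 2 * k ≤ (m + 1) * q ^ k + 4 * k := by
      have hm1 : (m + 1) * (2 * k ^ 2 + 2 * k + 2) ≤ (m + 1) * q ^ k :=
        Nat.mul_le_mul_left _ hqk
      rw [hn']
      nlinarith
    calc 4 ^ k * Mk ^ 2 * q ^ (4 * k) = (Mk * q ^ (2 * k)) ^ 2 * 4 ^ k := by ring
      _ ≤ (2 ^ k * q ^ (n' * (k + 1))) ^ 2 * 4 ^ k :=
          Nat.mul_le_mul_right _ (Nat.pow_le_pow_left h2 2)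
      _ = (4 ^ k * 4 ^ k) * q ^ (2 * (n' * (k + 1))) := by
          rw [mul_pow, e22, ← pow_mul, mul_comm (n' * (k + 1)) 2]; ring
      _ ≤ (q ^ k * q ^ k) * q ^ (2 * (n' * (k + 1))) :=
          Nat.mul_le_mul_right _ (Nat.mul_le_mul h4q h4q)
      _ = q ^ (2 * (n' * (k + 1)) + 2 * k) := by rw [← pow_add, ← pow_add]; congr 1; ring
      _ ≤ q ^ ((m + 1) * q ^ k + 4 * k) := Nat.pow_le_pow_right hq0 hexp
      _ = q ^ ((m + 1) * q ^ k) * q ^ (4 * k) := by rw [← pow_add]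
  calc 4 ^ k * Mk ^ 2 * ((q ^ k)! * (q ^ n' - q ^ k)!)
      ≤ (q ^ n').choose (q ^ k) * ((q ^ k)! * (q ^ n' - q ^ k)!) :=
        Nat.mul_le_mul_right _ (hMk2.trans hCge)
    _ = (q ^ n')! := by
        rw [← Nat.choose_mul_factorial_mul_factorial hkn']; ring

lemma geomb (n : ℕ) :
    ∑ k ∈ Finset.Icc 2 (n + 1), ((1 : ℝ) / 4) ^ k ≤ 1 / 12 - (1 / 3) * (1 / 4) ^ (n + 1) := by
  induction n with
  | zero =>
    rw [show Finset.Icc 2 1 = ∅ from rfl]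
    norm_num
  | succ n ih =>
    rw [Finset.sum_Icc_succ_top (by omega : 2 ≤ n + 2)]
    have h : ((1 : ℝ) / 4) ^ (n + 2) = (1 / 4) * (1 / 4) ^ (n + 1) := by ring
    rw [h]
    nlinarith [pow_nonneg (by norm_num : (0:ℝ) ≤ 1/4) (n + 1)]

lemma geomb' (b : ℕ) : ∑ k ∈ Finset.Icc 2 b, ((1 : ℝ) / 4) ^ k ≤ 1 / 12 := by
  match b with
  | 0 => rw [show Finset.Icc 2 0 = ∅ from rfl]; norm_num
  | 1 => rw [show Finset.Icc 2 1 = ∅ from rfl]; norm_num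
  | (n + 2) =>
    refine (geomb (n + 1)).trans ?_
    nlinarith [pow_nonneg (by norm_num : (0:ℝ) ≤ 1/4) (n + 2)]

lemma arith_main (q n : ℕ) (hq : 4 ≤ q) (hn : 2 ≤ n) (M : ℕ → ℕ)
    (hM : ∀ k, 1 ≤ k → k ≤ n - 1 → M k * (q ^ k * (q - 1) ^ k) ≤ q ^ (n * (k + 1))) :
    ∑ k ∈ Finset.Icc 1 (n - 1), (M k) ^ 2 * ((q ^ k)! * (q ^ n - q ^ k)!) < (q ^ n)! := by
  set T : ℕ → ℕ := fun k => (M k) ^ 2 * ((q ^ k)! * (q ^ n - q ^ k)!) with hT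
  have hsplit : Finset.Icc 1 (n - 1) = insert 1 (Finset.Icc 2 (n - 1)) := by
    ext j
    simp only [Finset.mem_Icc, Finset.mem_insert]
    omega
  have h1notin : (1 : ℕ) ∉ Finset.Icc 2 (n - 1) := by simp
  have hXpos : (0 : ℝ) < ((q ^ n)! : ℝ) := by
    exact_mod_cast (q ^ n).factorial_pos
  have hT1 : 5 * T 1 ≤ 3 * (q ^ n)! := by
    have hm := hM 1 (le_refl 1) (by omega)
    simp only [pow_one] at hm
    rw [show n * (1 + 1) = 2 * n by ring] at hm
    have := G1 q n (M 1) hq hn hm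
    simpa [hT, mul_assoc] using this
  have hTk : ∀ k ∈ Finset.Icc 2 (n - 1), (T k : ℝ) ≤ ((1 : ℝ) / 4) ^ k * ((q ^ n)! : ℝ) := by
    intro k hk
    rw [Finset.mem_Icc] at hk
    have hg2 := G2 q n k (M k) hq hk.1 (by omega) (hM k (by omega) hk.2)
    have hcast : (T k : ℝ) * 4 ^ k ≤ ((q ^ n)! : ℝ) := by
      have : T k * 4 ^ k ≤ (q ^ n)! := by
        calc T k * 4 ^ k = 4 ^ k * (M k) ^ 2 * ((q ^ k)! * (q ^ n - q ^ k)!) := by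
              rw [hT]; ring
          _ ≤ (q ^ n)! := hg2
      exact_mod_cast this
    have h4pos : (0 : ℝ) < 4 ^ k := by positivity
    rw [show ((1 : ℝ) / 4) ^ k * ((q ^ n)! : ℝ) = ((q ^ n)! : ℝ) / 4 ^ k by
      rw [div_pow]; ring]
    rw [le_div_iff₀ h4pos]
    exact hcast
  rw [hsplit, Finset.sum_insert h1notin]
  have hR : ((T 1 : ℝ) + ∑ k ∈ Finset.Icc 2 (n - 1), (T k : ℝ)) < ((q ^ n)! : ℝ) := by
    have hA : (T 1 : ℝ) ≤ 3 / 5 * ((q ^ n)! : ℝ) := by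
      have : (5 : ℝ) * T 1 ≤ 3 * ((q ^ n)! : ℝ) := by exact_mod_cast hT1
      linarith
    have hB : ∑ k ∈ Finset.Icc 2 (n - 1), (T k : ℝ)
        ≤ (∑ k ∈ Finset.Icc 2 (n - 1), ((1 : ℝ) / 4) ^ k) * ((q ^ n)! : ℝ) := by
      rw [Finset.sum_mul]
      exact Finset.sum_le_sum hTk
    have hC : (∑ k ∈ Finset.Icc 2 (n - 1), ((1 : ℝ) / 4) ^ k) * ((q ^ n)! : ℝ)
        ≤ 1 / 12 * ((q ^ n)! : ℝ) :=
      mul_le_mul_of_nonneg_right (geomb' (n - 1)) (le_of_lt hXpos)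
    linarith
  have : ((T 1 + ∑ k ∈ Finset.Icc 2 (n - 1), T k : ℕ) : ℝ) < ((q ^ n)! : ℝ) := by
    push_cast
    exact hR
  exact_mod_cast this

lemma exists_good_perm {F V : Type*} [Field F] [AddCommGroup V] [Module F V]
    [Fintype F] [Fintype V] (n : ℕ) (hq : 4 ≤ Fintype.card F) (hn : 2 ≤ n)
    (hN : Fintype.card V = Fintype.card F ^ n) :
    ∃ f : Equiv.Perm V, ∀ k, 1 ≤ k → k ≤ n - 1 →
      ¬ ∃ X : Set V, IsFlat F k X ∧ IsFlat F k (f '' X) := by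
  classical
  set q := Fintype.card F with hqdef
  by_contra hcon
  push_neg at hcon
  set M : ℕ → ℕ := fun k => Nat.card {X : Set V // IsFlat F k X} with hMdef
  have hM : ∀ k, 1 ≤ k → k ≤ n - 1 → M k * (q ^ k * (q - 1) ^ k) ≤ q ^ (n * (k + 1)) := by
    intro k _ _
    have := card_flats_mul_le (F := F) (V := V) k
    rw [hN, ← pow_mul] at this
    exact this
  have big : (Finset.univ : Finset (Equiv.Perm V)) ⊆
      (Finset.Icc 1 (n - 1)).biUnion (fun k =>
        (Finset.univ :
            Finset ({X : Set V // IsFlat F k X} × {Y : Set V // IsFlat F k Y})).biUnion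
          (fun P => Finset.univ.filter
            (fun f : Equiv.Perm V => f '' (P.1 : Set V) = (P.2 : Set V)))) := by
    intro f _
    obtain ⟨k, hk1, hk2, X, hX, hfX⟩ := hcon f
    refine Finset.mem_biUnion.2 ⟨k, Finset.mem_Icc.2 ⟨hk1, hk2⟩, ?_⟩
    refine Finset.mem_biUnion.2 ⟨(⟨X, hX⟩, ⟨f '' X, hfX⟩), Finset.mem_univ _, ?_⟩
    simp
  have hcard := Finset.card_le_card big
  rw [Finset.card_univ, Fintype.card_perm, hN] at hcard
  refine absurd (hcard.trans ?_) (not_le.2 (arith_main q n hq hn M hM))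
  refine Finset.card_biUnion_le.trans (Finset.sum_le_sum fun k hk => ?_)
  refine Finset.card_biUnion_le.trans ?_
  have hper : ∀ P : {X : Set V // IsFlat F k X} × {Y : Set V // IsFlat F k Y},
      (Finset.univ.filter
        (fun f : Equiv.Perm V => f '' (P.1 : Set V) = (P.2 : Set V))).card
        ≤ (q ^ k)! * (q ^ n - q ^ k)! := by
    intro P
    have h1 := card_perm_restrict_le (P.1 : Set V) (P.2 : Set V) (q ^ k)
      P.1.2.natCard P.2.2.natCard
    rw [hN] at h1
    refine le_trans (le_of_eq ?_) h1
    rw [Nat.card_eq_fintype_card, Fintype.card_subtype]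
  calc ∑ P ∈ (Finset.univ :
          Finset ({X : Set V // IsFlat F k X} × {Y : Set V // IsFlat F k Y})),
        (Finset.univ.filter
          (fun f : Equiv.Perm V => f '' (P.1 : Set V) = (P.2 : Set V))).card
      ≤ (Finset.univ :
          Finset ({X : Set V // IsFlat F k X} × {Y : Set V // IsFlat F k Y})).card *
          ((q ^ k)! * (q ^ n - q ^ k)!) := by
        refine le_trans (Finset.sum_le_sum fun P _ => hper P) ?_
        rw [Finset.sum_const, smul_eq_mul]
    _ = (M k) ^ 2 * ((q ^ k)! * (q ^ n - q ^ k)!) := by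
        rw [Finset.card_univ, Fintype.card_prod, hMdef]
        simp [Nat.card_eq_fintype_card, sq]

/-- For every finite field `F` with `|F| = q ≥ 4` and every `n ≥ 2` there is a single
permutation `f` of `F^n` with `k`-affinity `0` simultaneously for all `1 ≤ k ≤ n - 1`. -/
theorem exists_perm_affinity_zero_all_k_q_ge_four (F : Type*) [Field F] [Fintype F]
    (hq : 4 ≤ Fintype.card F) (n : ℕ) (hn : 2 ≤ n) :
    ∃ f : Equiv.Perm (Fin n → F),
      ∀ k : ℕ, 1 ≤ k → k ≤ n - 1 →
        affinity F k (⇑f : (Fin n → F) → (Fin n → F)) = 0 := by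
  classical
  have hN : Fintype.card (Fin n → F) = Fintype.card F ^ n := by
    simp [Fintype.card_fun]
  obtain ⟨f, hf⟩ := exists_good_perm (F := F) (V := Fin n → F) n hq hn hN
  refine ⟨f, fun k hk1 hk2 => ?_⟩
  have : {X : Set (Fin n → F) | IsFlat F k X ∧ IsFlat F k (⇑f '' X)} = ∅ := by
    ext X
    simp only [Set.mem_setOf_eq, Set.mem_empty_iff_false, iff_false, not_and]
    intro h1 h2
    exact hf k hk1 hk2 ⟨X, h1, h2⟩
  simp only [affinity, this, Set.ncard_empty]
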